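/- Let X be a normed linear space, V ⊂ X a finite dimensional subspace, x_1^*,…,x_M^* ∈ X^*, Z_* their span, and suppose the restriction map S : z^* ↦ z^*|_V from Z_* to V^* is injective with ‖S^{-1}‖ ≤ κ. Then for every f ∈ X and every κ_1 > κ there exists T(f) ∈ V with z^*(T(f)) = z^*(f) for all z^* ∈ Z_* and ‖f − T(f)‖_X ≤ (1 + κ_1) inf_{v ∈ V} ‖f − v‖_X. -/

import Mathlib

set_option maxHeartbeats 1000000
set_option synthInstance.maxHeartbeats 400000


theorem interpolation_with_near_best_approximation
    (X : Type*) [NormedAddCommGroup X] [NormedSpace ℝ X]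
    (V : Submodule ℝ X) [FiniteDimensional ℝ V]
    (M : ℕ) (xstar : Fin M → (X →L[ℝ] ℝ))
    (Z : Submodule ℝ (X →L[ℝ] ℝ)) (hZ : Z = Submodule.span ℝ (Set.range xstar))
    (hinj : ∀ z ∈ Z, (∀ v : V, z v = 0) → z = 0)
    (κ : ℝ) (hκ : 0 ≤ κ)
    (hS : ∀ z ∈ Z, ‖z‖ ≤ κ * ‖z.comp V.subtypeL‖) :
    ∀ f : X, ∀ κ₁ : ℝ, κ < κ₁ →
      ∃ T ∈ V, (∀ z ∈ Z, z T = z f) ∧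
        ‖f - T‖ ≤ (1 + κ₁) * ⨅ v : V, ‖f - (v : X)‖ := by
  intro f κ₁ hκ₁
  set d : ℝ := ⨅ v : V, ‖f - (v : X)‖ with hd
  have hd0 : 0 ≤ d := Real.iInf_nonneg fun v => norm_nonneg _
  by_cases hdz : d = 0
  · -- f is in the closure of V, hence in V
    have hne : (V : Set X).Nonempty := ⟨0, V.zero_mem⟩
    have hinf : Metric.infDist f (V : Set X) = 0 := by
      rw [Metric.infDist_eq_iInf]
      simpa [dist_eq_norm] using hdz
    have hf : f ∈ V := by
      have hcl : f ∈ closure (V : Set X) :=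
        (Metric.mem_closure_iff_infDist_zero hne).2 hinf
      rwa [V.closed_of_finiteDimensional.closure_eq] at hcl
    exact ⟨f, hf, fun z _ => rfl, by simp [← hd, hdz]⟩
  · have hdpos : 0 < d := lt_of_le_of_ne hd0 (Ne.symm hdz)
    have h1κ : (0:ℝ) < 1 + κ := by linarith
    set ε : ℝ := (κ₁ - κ) * d / (1 + κ) with hε
    have hεpos : 0 < ε := by
      apply div_pos (mul_pos (by linarith) hdpos) h1κ
    obtain ⟨v, hv⟩ : ∃ v : V, ‖f - (v : X)‖ < d + ε :=
      exists_lt_of_ciInf_lt (by rw [← hd]; linarith)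
    set w : X := f - (v : X) with hw
    -- the restriction map S on Z
    let S : Z →ₗ[ℝ] (V →L[ℝ] ℝ) :=
      { toFun := fun z => (z : X →L[ℝ] ℝ).comp V.subtypeL
        map_add' := by intro a b; ext x; simp
        map_smul' := by intro c a; ext x; simp }
    have hSapp : ∀ (z : Z) (x : V), S z x = (z : X →L[ℝ] ℝ) x := fun z x => rfl
    have hSinj : Function.Injective S := by
      intro a b hab
      have h0 : ((a - b : Z) : X →L[ℝ] ℝ) = 0 := by
        apply hinj _ (a - b).2
        intro x
        have := congrArg (fun g => g x) hab
        simp only [hSapp] at this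
        simp only [Submodule.coe_sub, ContinuousLinearMap.sub_apply,
          ContinuousLinearMap.zero_apply]
        simpa using sub_eq_zero.mpr this
      have : (a - b : Z) = 0 := Subtype.ext (by simpa using h0)
      exact sub_eq_zero.mp this
    let W : Submodule ℝ (V →L[ℝ] ℝ) := LinearMap.range S
    let e : Z ≃ₗ[ℝ] W := LinearEquiv.ofInjective S hSinj
    -- the evaluation functional
    let ev : Z →ₗ[ℝ] ℝ :=
      { toFun := fun z => (z : X →L[ℝ] ℝ) w
        map_add' := by intro a b; simp
        map_smul' := by intro c a; simp }
    let φlin : W →ₗ[ℝ] ℝ := ev ∘ₗ (e.symm : W →ₗ[ℝ] Z)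
    have hφbound : ∀ y : W, ‖φlin y‖ ≤ (κ * ‖w‖) * ‖y‖ := by
      intro y
      set z : Z := e.symm y with hz
      have hSz : S z = (y : V →L[ℝ] ℝ) := by
        rw [hz]
        exact LinearEquiv.ofInjective_symm_apply (f := S) (h := hSinj) y
      have h1 : ‖(z : X →L[ℝ] ℝ) w‖ ≤ ‖(z : X →L[ℝ] ℝ)‖ * ‖w‖ :=
        (z : X →L[ℝ] ℝ).le_opNorm w
      have h2 : ‖(z : X →L[ℝ] ℝ)‖ ≤ κ * ‖S z‖ := hS _ z.2
      calc ‖φlin y‖ = ‖(z : X →L[ℝ] ℝ) w‖ := rfl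
        _ ≤ ‖(z : X →L[ℝ] ℝ)‖ * ‖w‖ := h1
        _ ≤ (κ * ‖S z‖) * ‖w‖ := by
            apply mul_le_mul_of_nonneg_right h2 (norm_nonneg _)
        _ = (κ * ‖w‖) * ‖y‖ := by
            rw [hSz]
            show κ * ‖y‖ * ‖w‖ = κ * ‖w‖ * ‖y‖
            ring
    -- Hahn-Banach extension to all of V →L[ℝ] ℝ
    obtain ⟨ψ, hψext, hψnorm⟩ :=
      exists_extension_norm_eq (𝕜 := ℝ) (E := V →L[ℝ] ℝ) W (LinearMap.mkContinuous φlin (κ * ‖w‖) hφbound)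
    have hψle : ‖ψ‖ ≤ κ * ‖w‖ := by
      rw [hψnorm]
      apply ContinuousLinearMap.opNorm_le_bound _ (mul_nonneg hκ (norm_nonneg w))
      intro y
      show ‖φlin y‖ ≤ _
      exact hφbound y
    -- reflexivity of the finite-dimensional space V
    let ψalg : Module.Dual ℝ (Module.Dual ℝ V) :=
      ψ.toLinearMap ∘ₗ
        (LinearMap.toContinuousLinearMap :
          Module.Dual ℝ V ≃ₗ[ℝ] (V →L[ℝ] ℝ)).toLinearMap
    set u : V := (Module.evalEquiv ℝ V).symm ψalg with hu
    have hueval : ∀ g : V →L[ℝ] ℝ, g u = ψ g := by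
      intro g
      have h1 : (g.toLinearMap) u = ψalg g.toLinearMap :=
        Module.apply_evalEquiv_symm_apply ℝ V g.toLinearMap ψalg
      have h2 : LinearMap.toContinuousLinearMap g.toLinearMap = g := by
        ext x
        rw [LinearMap.coe_toContinuousLinearMap']
        rfl
      calc g u = (g.toLinearMap) u := rfl
        _ = ψalg g.toLinearMap := h1
        _ = ψ (LinearMap.toContinuousLinearMap g.toLinearMap) := rfl
        _ = ψ g := by rw [h2]
    have hunorm : ‖u‖ ≤ κ * ‖w‖ := by
      have hincl : NormedSpace.inclusionInDoubleDualLi ℝ (E := V) u = ψ := by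
        ext g
        exact hueval g
      have := (NormedSpace.inclusionInDoubleDualLi ℝ (E := V)).norm_map u
      rw [hincl] at this
      rw [← this]
      exact hψle
    -- the interpolant
    refine ⟨(v : X) + (u : X), V.add_mem v.2 u.2, ?_, ?_⟩
    · intro z hz
      have hy : S ⟨z, hz⟩ ∈ W := LinearMap.mem_range_self S ⟨z, hz⟩
      have hgu : z (u : X) = ψ (S ⟨z, hz⟩) := hueval (S ⟨z, hz⟩)
      have hext : ψ (S ⟨z, hz⟩) = φlin ⟨S ⟨z, hz⟩, hy⟩ := by
        rw [hψext ⟨S ⟨z, hz⟩, hy⟩]; rfl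
      have heq : e ⟨z, hz⟩ = ⟨S ⟨z, hz⟩, hy⟩ := rfl
      have hφval : φlin ⟨S ⟨z, hz⟩, hy⟩ = z w := by
        show ev (e.symm ⟨S ⟨z, hz⟩, hy⟩) = z w
        rw [← heq, LinearEquiv.symm_apply_apply]
        rfl
      have hzw : z (u : X) = z w := by rw [hgu, hext, hφval]
      have : z ((v : X) + (u : X)) = z (v : X) + z (u : X) := map_add z _ _
      rw [this, hzw, hw]
      simp [map_sub]
    · have hwu : f - ((v : X) + (u : X)) = w - (u : X) := by
        rw [hw]; abel
      have hnu : ‖(u : X)‖ = ‖u‖ := rfl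
      have h1 : ‖f - ((v : X) + (u : X))‖ ≤ ‖w‖ + ‖u‖ := by
        rw [hwu]
        calc ‖w - (u : X)‖ ≤ ‖w‖ + ‖(u : X)‖ := norm_sub_le _ _
          _ = ‖w‖ + ‖u‖ := by rw [hnu]
      have h2 : ‖w‖ + ‖u‖ ≤ (1 + κ) * ‖w‖ := by nlinarith [norm_nonneg w]
      have h3 : (1 + κ) * ‖w‖ ≤ (1 + κ) * (d + ε) := by
        apply mul_le_mul_of_nonneg_left (le_of_lt hv) (le_of_lt h1κ)
      have h4 : (1 + κ) * (d + ε) = (1 + κ₁) * d := by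
        rw [hε]; field_simp; ring
      linarith
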